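/- arXiv:0805.2671 — 2 statements merged into one kernel-verified Lean document; each statement's English description precedes it below -/
import Mathlib

section
/- The total number of leaves of a BDT of height h is t(h) = 2^(2^(h-1)) for h ≥ 1; consequently, a BDT storing n ≥ 2 elements at its leaves has height h = O(log log n), specifically h ≤ ⌈log₂ log₂ n⌉ + 1. -/
/-- The number of leaves of a BDT of height h is t(h) = 2^(2^(h-1)) for h ≥ 1;
consequently a BDT storing n ≥ 2 elements has height h ≤ ⌈log₂ log₂ n⌉ + 1,
i.e. h = O(log log n). -/
theorem bdt_height_loglog (d t : ℕ → ℕ)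
    (hd0 : d 0 = 2) (ht0 : t 0 = 1)
    (ht : ∀ i, 1 ≤ i → t i = t (i - 1) * d (i - 1))
    (hd : ∀ i, 1 ≤ i → d i = t i) :
    (∀ h, 1 ≤ h → t h = 2 ^ (2 ^ (h - 1))) ∧
    ∀ n, 2 ≤ n → ∃ h, 1 ≤ h ∧ n ≤ t h ∧ h ≤ Nat.clog 2 (Nat.clog 2 n) + 1 := by
  have key : ∀ h, 1 ≤ h → t h = 2 ^ (2 ^ (h - 1)) := by
    intro h hh
    induction h with
    | zero => omega
    | succ k ih =>
      rcases Nat.eq_zero_or_pos k with hk | hk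
      · subst hk
        simp [ht 1 le_rfl, ht0, hd0]
      · have hk1 : 1 ≤ k := hk
        have h1 : t (k + 1) = t k * d k := by simpa using ht (k + 1) (by omega)
        rw [h1, hd k hk1, ih hk1]
        rw [← pow_add]
        congr 1
        rw [← two_mul, ← pow_succ']
        congr 1
        omega
  refine ⟨key, fun n hn => ?_⟩
  refine ⟨Nat.clog 2 (Nat.clog 2 n) + 1, by omega, ?_, le_rfl⟩
  rw [key _ (by omega)]
  simp only [Nat.add_sub_cancel]
  calc n ≤ 2 ^ Nat.clog 2 n := Nat.le_pow_clog one_lt_two n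
    _ ≤ 2 ^ 2 ^ Nat.clog 2 (Nat.clog 2 n) :=
        Nat.pow_le_pow_right (by norm_num) (Nat.le_pow_clog one_lt_two _)
end

section
/- Expected-time composition: if a finger search performs a climb phase of r = O(log log d) steps where step i costs O(√(log d_i/log log d_i)) with d_i = 2^(2^i) and d_r ≤ d < d_{r+1}, plus a descent in a Beame–Fich structure over d elements costing O(√(log d/log log d)), then the total cost is O(√(log d/log log d)). -/
lemma climb_sum_le : ∀ r : ℕ, 2 ≤ r →
    ∑ i ∈ Finset.Icc 1 r, Real.sqrt ((2 : ℝ) ^ i / i) ≤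
      10 * Real.sqrt ((2 : ℝ) ^ r / r) := by
  intro r hr
  induction r, hr using Nat.le_induction with
  | base =>
    have : Finset.Icc 1 2 = {1, 2} := by decide
    rw [this]
    norm_num
    have h4 : Real.sqrt 4 = 2 := by
      rw [show (4:ℝ) = 2^2 by norm_num, Real.sqrt_sq (by norm_num)]
    have h2 : (0:ℝ) < Real.sqrt 2 := Real.sqrt_pos.mpr (by norm_num)
    have h2' : Real.sqrt 2 * Real.sqrt 2 = 2 := Real.mul_self_sqrt (by norm_num)
    have h5 : (2:ℝ) / Real.sqrt 2 = Real.sqrt 2 := by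
      rw [eq_comm, eq_div_iff (ne_of_gt h2)]; exact h2'
    nlinarith
  | succ n hn ih =>
    rw [Finset.sum_Icc_succ_top (by omega)]
    have key : 10 * Real.sqrt ((2:ℝ) ^ n / n) ≤ 9 * Real.sqrt ((2:ℝ) ^ (n+1) / ((n:ℝ)+1)) := by
      have e1 : (10:ℝ) * Real.sqrt ((2:ℝ) ^ n / n) = Real.sqrt (100 * ((2:ℝ) ^ n / n)) := by
        rw [Real.sqrt_mul (by norm_num), show Real.sqrt 100 = 10 by
          rw [show (100:ℝ) = 10^2 by norm_num, Real.sqrt_sq (by norm_num)]]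
      have e2 : (9:ℝ) * Real.sqrt ((2:ℝ) ^ (n+1) / ((n:ℝ)+1)) =
          Real.sqrt (81 * ((2:ℝ) ^ (n+1) / ((n:ℝ)+1))) := by
        rw [Real.sqrt_mul (by norm_num), show Real.sqrt 81 = 9 by
          rw [show (81:ℝ) = 9^2 by norm_num, Real.sqrt_sq (by norm_num)]]
      rw [e1, e2]
      apply Real.sqrt_le_sqrt
      have hn' : (2:ℝ) ≤ (n:ℝ) := by exact_mod_cast hn
      have hnpos : (0:ℝ) < (n:ℝ) := by linarith
      rw [← mul_div_assoc, ← mul_div_assoc, div_le_div_iff₀ hnpos (by linarith), pow_succ]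
      nlinarith [mul_nonneg (le_of_lt (pow_pos (show (0:ℝ) < 2 by norm_num) n))
        (show (0:ℝ) ≤ 62 * (n:ℝ) - 100 by linarith)]
    push_cast
    linarith [ih]


/-- Expected-time composition for finger search: for d ≥ 16 and
r = ⌊log₂ log₂ d⌋, the climb cost ∑_{i=1}^{r} √(2^i/i) (step i costing
√(log d_i/log log d_i) with d_i = 2^(2^i)) plus the final Beame–Fich descent
cost √(log d/log log d) is at most C·√(log d/log log d) for an absolute
constant C. -/
theorem finger_search_total_cost :
    ∃ C : ℝ, 0 < C ∧ ∀ d : ℕ, 16 ≤ d →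
      (∑ i ∈ Finset.Icc 1 (Nat.log 2 (Nat.log 2 d)),
          Real.sqrt ((2 : ℝ) ^ i / i)) +
        Real.sqrt (Real.logb 2 d / Real.logb 2 (Real.logb 2 d)) ≤
      C * Real.sqrt (Real.logb 2 d / Real.logb 2 (Real.logb 2 d)) := by
  refine ⟨16, by norm_num, fun d hd => ?_⟩
  set n := Nat.log 2 d with hn
  set r := Nat.log 2 n with hr
  set L := Real.logb 2 d with hL
  set ℓ := Real.logb 2 L with hℓ
  have hb : (1:ℝ) < 2 := by norm_num
  have hd' : (16:ℝ) ≤ (d:ℝ) := by exact_mod_cast hd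
  -- L ≥ 4
  have hL4 : (4:ℝ) ≤ L := by
    have h := Real.logb_le_logb_of_le hb (show (0:ℝ) < 16 by norm_num) hd'
    have : Real.logb 2 (16:ℝ) = 4 := by
      rw [show (16:ℝ) = 2^(4:ℕ) by norm_num, Real.logb_pow, Real.logb_self_eq_one (by norm_num : (1:ℝ) < 2)]; norm_num
    linarith [this ▸ h]
  -- ℓ ≥ 2
  have hℓ2 : (2:ℝ) ≤ ℓ := by
    have h := Real.logb_le_logb_of_le hb (show (0:ℝ) < 4 by norm_num) hL4
    have : Real.logb 2 (4:ℝ) = 2 := by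
      rw [show (4:ℝ) = 2^(2:ℕ) by norm_num, Real.logb_pow, Real.logb_self_eq_one (by norm_num : (1:ℝ) < 2)]; norm_num
    linarith [this ▸ h]
  -- n ≥ 4
  have hn4 : 4 ≤ n := by
    have e : Nat.log 2 16 = 4 := Nat.log_eq_of_pow_le_of_lt_pow (by norm_num) (by norm_num)
    have : Nat.log 2 16 ≤ n := Nat.log_mono_right hd
    omega
  -- r ≥ 2
  have hr2 : 2 ≤ r := by
    have e : Nat.log 2 4 = 2 := Nat.log_eq_of_pow_le_of_lt_pow (by norm_num) (by norm_num)
    have : Nat.log 2 4 ≤ r := Nat.log_mono_right hn4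
    omega
  -- 2^r ≤ n
  have h2r : (2:ℝ)^r ≤ (n:ℝ) := by
    exact_mod_cast Nat.pow_log_le_self 2 (by omega : n ≠ 0)
  -- (n:ℝ) ≤ L
  have hnL : (n:ℝ) ≤ L := by
    have h1 : (2:ℕ)^n ≤ d := Nat.pow_log_le_self 2 (by omega)
    have h2 : ((2:ℝ))^n ≤ (d:ℝ) := by exact_mod_cast h1
    have h := Real.logb_le_logb_of_le hb (by positivity) h2
    rwa [Real.logb_pow, Real.logb_self_eq_one (by norm_num : (1:ℝ) < 2), mul_one] at h
  have hLlt : L ≤ (2:ℝ)^(r+1) := by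
    have h1 : n < 2^(r+1) := Nat.lt_pow_succ_log_self (by norm_num) n
    have h2 : (n:ℝ) + 1 ≤ ((2:ℝ))^(r+1) := by exact_mod_cast h1
    have h3 : L < (n:ℝ) + 1 := by
      have := Nat.lt_pow_succ_log_self (show 1 < 2 by norm_num) d
      have hd2 : (d:ℝ) < (2:ℝ)^(n+1) := by exact_mod_cast this
      have := Real.logb_lt_logb hb (by linarith) hd2
      rw [Real.logb_pow, Real.logb_self_eq_one (by norm_num : (1:ℝ) < 2), mul_one,
        ← hL] at this
      push_cast at this
      exact this
    linarith
  have hℓ2r : ℓ ≤ 2 * r := by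
    have h := Real.logb_le_logb_of_le hb (by linarith : (0:ℝ) < L) hLlt
    rw [Real.logb_pow, Real.logb_self_eq_one (by norm_num : (1:ℝ) < 2), mul_one] at h
    have hr2' : (2:ℝ) ≤ (r:ℝ) := by exact_mod_cast hr2
    push_cast at h
    linarith
  -- 2^r / r ≤ 2 * (L/ℓ)
  have hrpos : (0:ℝ) < (r:ℝ) := by
    have : (2:ℝ) ≤ (r:ℝ) := by exact_mod_cast hr2
    linarith
  have hℓpos : (0:ℝ) < ℓ := by linarith
  have hkey : (2:ℝ)^r / r ≤ 2 * (L / ℓ) := by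
    rw [div_le_iff₀ hrpos]
    have h1 : (2:ℝ)^r ≤ L := by linarith
    have h2 : 2 * (L/ℓ) * r = L * (2*r) / ℓ := by ring
    rw [h2, le_div_iff₀ hℓpos]
    have hLpos : (0:ℝ) < L := by linarith
    nlinarith
  have hsq : Real.sqrt ((2:ℝ)^r / r) ≤ Real.sqrt 2 * Real.sqrt (L/ℓ) := by
    rw [← Real.sqrt_mul (by norm_num)]
    exact Real.sqrt_le_sqrt hkey
  have hsum := climb_sum_le r hr2
  have hsqrt2 : Real.sqrt 2 ≤ 1.5 := by
    rw [show (1.5:ℝ) = Real.sqrt (1.5^2) by rw [Real.sqrt_sq (by norm_num)]]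
    apply Real.sqrt_le_sqrt; norm_num
  have hS : (0:ℝ) ≤ Real.sqrt (L/ℓ) := Real.sqrt_nonneg _
  calc (∑ i ∈ Finset.Icc 1 r, Real.sqrt ((2 : ℝ) ^ i / i)) + Real.sqrt (L/ℓ)
      ≤ 10 * (Real.sqrt 2 * Real.sqrt (L/ℓ)) + Real.sqrt (L/ℓ) := by nlinarith
    _ ≤ 16 * Real.sqrt (L/ℓ) := by nlinarith
end
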